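/- In M_n (n ≥ 1), the elements 0 and 1 are distinct; in particular M_n is not the trivial monoid. -/

import Mathlib

inductive Letter | a | b | c | d | z
deriving DecidableEq

abbrev W := FreeMonoid Letter
def A : W := FreeMonoid.of .a
def B : W := FreeMonoid.of .b
def C : W := FreeMonoid.of .c
def D : W := FreeMonoid.of .d
def Z : W := FreeMonoid.of .z

/-- The defining relations of `M n`, with the zero realized by the letter `z`. -/
def relM (n : ℕ) : W → W → Prop := fun x y =>
  (x = A ^ n * B ∧ y = Z) ∨
  (x = A * C ∧ y = 1) ∨ (x = D * B ∧ y = 1) ∨ (x = D * C ∧ y = 1) ∨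
  (∃ k, 1 ≤ k ∧ k ≤ n - 1 ∧ x = D * A ^ k * B ∧ y = 1) ∨
  (∃ l : Letter, x = FreeMonoid.of l * Z ∧ y = Z) ∨
  (∃ l : Letter, x = Z * FreeMonoid.of l ∧ y = Z)

def Mcon (n : ℕ) : Con W := conGen (relM n)

/-- The monoid `M n = Mon⟨a,b,c,d : aⁿb=0, ac=1, db=1, dc=1, daᵏb=1 (1 ≤ k ≤ n-1)⟩`. -/
abbrev M (n : ℕ) := (Mcon n).Quotient

/-! ### A concrete model: letters act on stacks `Option (List ℕ)` -/

abbrev St := Option (List ℕ)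

/-- Action of each letter on a stack (with `none` a failure/zero state). -/
def act (n : ℕ) : Letter → Function.End St
  | .a => fun s => s.bind fun L => match L with
      | [] => none
      | (s0 :: L') => if s0 = 0 then some L'
          else if s0 < n then some ((s0+1) :: L') else none
  | .b => fun s => s.map (fun L => 1 :: L)
  | .c => fun s => s.map (fun L => 0 :: L)
  | .d => fun s => s.bind fun L => match L with
      | [] => none
      | (_ :: L') => some L'
  | .z => fun _ => none

lemma act_none (n : ℕ) (l : Letter) : act n l none = none := by
  cases l <;> rfl

lemma act_a_cons (n s : ℕ) (L : List ℕ) (h1 : s ≠ 0) (h2 : s < n) :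
    act n .a (some (s :: L)) = some ((s+1) :: L) := by
  simp [act, h1, h2]

lemma act_a_cons_die (n s : ℕ) (L : List ℕ) (h1 : s ≠ 0) (h2 : ¬ s < n) :
    act n .a (some (s :: L)) = none := by
  simp [act, h1, h2]

def φ (n : ℕ) : W →* Function.End St := FreeMonoid.lift (act n)

lemma End_pow_apply (f : Function.End St) : ∀ (k : ℕ) (x : St), (f ^ k) x = f^[k] x := by
  intro k
  induction k with
  | zero => intro x; rfl
  | succ k ih =>
      intro x
      rw [pow_succ]
      exact ih (f x)

lemma a_iter_none (n : ℕ) : ∀ k, (act n .a)^[k] (none : St) = none := by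
  intro k
  induction k with
  | zero => rfl
  | succ k ih => rw [Function.iterate_succ_apply (f := (act n .a : St → St)), act_none]; exact ih

lemma a_iter_ok (n : ℕ) : ∀ (k s : ℕ) (L : List ℕ), 1 ≤ s → s + k ≤ n →
    (act n .a)^[k] (some (s :: L)) = some ((s + k) :: L) := by
  intro k
  induction k with
  | zero => intro s L _ _; simp; rfl
  | succ k ih =>
      intro s L hs hsk
      rw [Function.iterate_succ_apply (f := (act n .a : St → St)), act_a_cons n s L (by omega) (by omega),
        ih (s + 1) L (by omega) (by omega)]
      congr 2
      omega

lemma a_iter_die (n : ℕ) : ∀ (m s : ℕ) (L : List ℕ), 1 ≤ s → s + m = n →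
    (act n .a)^[m + 1] (some (s :: L)) = none := by
  intro m
  induction m with
  | zero =>
      intro s L hs hsm
      rw [Function.iterate_one (f := (act n .a : St → St)), act_a_cons_die n s L (by omega) (by omega)]
  | succ m ih =>
      intro s L hs hsm
      rw [Function.iterate_succ_apply (f := (act n .a : St → St)), act_a_cons n s L (by omega) (by omega)]
      exact ih (s + 1) L (by omega) (by omega)

lemma φ_letter (n : ℕ) (l : Letter) : φ n (FreeMonoid.of l) = act n l :=
  FreeMonoid.lift_eval_of _ _

lemma key (n : ℕ) (hn : 1 ≤ n) : Mcon n ≤ Con.ker (φ n) := by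
  refine Con.conGen_le.2 ?_
  rintro x y (⟨hx, hy⟩ | ⟨hx, hy⟩ | ⟨hx, hy⟩ | ⟨hx, hy⟩ |
    ⟨k, hk1, hk2, hx, hy⟩ | ⟨l, hx, hy⟩ | ⟨l, hx, hy⟩) <;>
    subst hx <;> subst hy <;>
    simp only [Con.ker_rel, map_mul, map_pow, map_one, A, B, C, D, Z, φ_letter] <;>
    funext s <;> cases' s with L
  · show ((act n .a) ^ n) ((act n .b) none) = act n .z none
    rw [act_none, End_pow_apply, a_iter_none]; rfl
  · show ((act n .a) ^ n) ((act n .b) (some L)) = act n .z (some L)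
    rw [End_pow_apply]
    show (act n .a)^[n] (some (1 :: L)) = none
    obtain ⟨m, rfl⟩ : ∃ m, n = m + 1 := ⟨n - 1, by omega⟩
    exact a_iter_die (m+1) m 1 L (by omega) (by omega)
  · rfl
  · show (act n .a) ((act n .c) (some L)) = some L
    simp [act]
  · rfl
  · rfl
  · rfl
  · rfl
  · show (act n .d) (((act n .a) ^ k) ((act n .b) none)) = (1 : Function.End St) none
    rw [act_none, End_pow_apply, a_iter_none, act_none]; rfl
  · show (act n .d) (((act n .a) ^ k) ((act n .b) (some L))) = some L
    rw [End_pow_apply]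
    show (act n .d) ((act n .a)^[k] (some (1 :: L))) = some L
    rw [a_iter_ok n k 1 L (by omega) (by omega)]
    rfl
  · show (act n l) ((act n .z) none) = none
    rw [show (act n .z) (none : St) = none from rfl, act_none]
  · show (act n l) ((act n .z) (some L)) = none
    rw [show (act n .z) (some L) = none from rfl, act_none]
  · rfl
  · rfl

/-- In `M n` the elements `0` and `1` are distinct. -/
theorem stmt12 (n : ℕ) (hn : 1 ≤ n) : (Z : M n) ≠ 1 := by
  intro h
  have h1 : Mcon n Z 1 := (Con.eq (Mcon n)).mp h
  have h2 : φ n Z = φ n 1 := key n hn h1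
  rw [map_one, Z, φ_letter] at h2
  have h3 := congrFun h2 (some [])
  exact Option.some_ne_none _ (h3 : (none : St) = some []).symm
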